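/- Let M be a p×p positive semidefinite matrix of rank d such that 1 - δ₁ ≤ M_{ii} ≤ 1 for all i and |M_{ij}| ≤ δ₂ for all i ≠ j, where 0 < δ₁, δ₂ < 1. Then d ≥ p(1-δ₁)² / (1 + (p-1)δ₂²). -/

import Mathlib

open Matrix Finset

lemma herm_trace_eq {n : Type*} [Fintype n] [DecidableEq n] (A : Matrix n n ℝ)
    (hA : A.IsHermitian) : A.trace = ∑ i, hA.eigenvalues i := by
  set U : Matrix n n ℝ := (hA.eigenvectorUnitary : Matrix n n ℝ) with hUdef
  set D : Matrix n n ℝ := diagonal (RCLike.ofReal ∘ hA.eigenvalues) with hDdef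
  have h1 : star U * U = 1 := (Matrix.mem_unitaryGroup_iff').mp (hA.eigenvectorUnitary).2
  have h : A.trace = (U * D * star U).trace := congrArg Matrix.trace hA.spectral_theorem
  rw [h, Matrix.trace_mul_cycle, h1, one_mul,
    Matrix.trace_diagonal]
  simp [RCLike.ofReal]

lemma herm_trace_sq_eq {n : Type*} [Fintype n] [DecidableEq n] (A : Matrix n n ℝ)
    (hA : A.IsHermitian) : (A * A).trace = ∑ i, hA.eigenvalues i ^ 2 := by
  set U : Matrix n n ℝ := (hA.eigenvectorUnitary : Matrix n n ℝ) with hUdef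
  set D : Matrix n n ℝ := diagonal (RCLike.ofReal ∘ hA.eigenvalues) with hDdef
  have h1 : star U * U = 1 := (Matrix.mem_unitaryGroup_iff').mp (hA.eigenvectorUnitary).2
  have key : (A * A).trace = (U * (D * D) * star U).trace := by
    have h2 : A * A = (U * D * star U) * (U * D * star U) := by
      conv_lhs => rw [hA.spectral_theorem]
      rfl
    rw [h2]
    congr 1
    calc (U * D * star U) * (U * D * star U)
        = U * D * ((star U * U) * (D * star U)) := by
          simp only [Matrix.mul_assoc]
      _ = U * (D * D) * star U := by
          rw [h1, Matrix.one_mul]; simp only [Matrix.mul_assoc]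
  rw [key, Matrix.trace_mul_cycle, h1, one_mul,
    Matrix.diagonal_mul_diagonal, Matrix.trace_diagonal]
  simp [RCLike.ofReal, sq]

theorem near_identity_rank_bound (p d : ℕ) (δ₁ δ₂ : ℝ)
    (hδ₁ : 0 < δ₁) (hδ₁' : δ₁ < 1) (hδ₂ : 0 < δ₂) (hδ₂' : δ₂ < 1)
    (M : Matrix (Fin p) (Fin p) ℝ) (hM : M.PosSemidef)
    (hrank : M.rank = d)
    (hdiag : ∀ i, 1 - δ₁ ≤ M i i ∧ M i i ≤ 1)
    (hoff : ∀ i j, i ≠ j → |M i j| ≤ δ₂) :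
    (d : ℝ) ≥ p * (1 - δ₁)^2 / (1 + (p - 1) * δ₂^2) := by
  rcases Nat.eq_zero_or_pos p with hp | hp
  · subst hp
    simp
  have hH := hM.1
  set lam := hH.eigenvalues with hlam
  have hnn : ∀ i, 0 ≤ lam i := fun i => hM.eigenvalues_nonneg i
  -- trace lower bound
  have htr : (p : ℝ) * (1 - δ₁) ≤ ∑ i, lam i := by
    rw [← herm_trace_eq M hH, Matrix.trace]
    calc (p : ℝ) * (1 - δ₁) = ∑ _i : Fin p, (1 - δ₁) := by
          simp [mul_comm]
          ring
      _ ≤ ∑ i, M.diag i := Finset.sum_le_sum fun i _ => (hdiag i).1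
  -- trace square upper bound
  have htr2 : ∑ i, lam i ^ 2 ≤ (p : ℝ) * (1 + ((p : ℝ) - 1) * δ₂^2) := by
    rw [← herm_trace_sq_eq M hH, Matrix.trace]
    have hrow : ∀ i : Fin p, (M * M).diag i ≤ 1 + ((p : ℝ) - 1) * δ₂^2 := by
      intro i
      have : (M * M).diag i = ∑ j, M i j * M j i := rfl
      rw [this]
      have hsym : ∀ j, M j i = M i j := fun j => by conv_rhs => rw [← hH, Matrix.conjTranspose_apply, star_trivial]
      have : ∑ j, M i j * M j i = M i i ^ 2 + ∑ j ∈ Finset.univ.erase i, M i j ^ 2 := by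
        rw [← Finset.add_sum_erase _ _ (Finset.mem_univ i)]
        simp only [hsym, sq]
      rw [this]
      have h1 : M i i ^ 2 ≤ 1 := by
        have h0 : 0 ≤ M i i := le_trans (by linarith) (hdiag i).1
        calc M i i ^ 2 ≤ 1 ^ 2 := pow_le_pow_left₀ h0 (hdiag i).2 2
          _ = 1 := one_pow 2
      have h2 : ∑ j ∈ Finset.univ.erase i, M i j ^ 2 ≤ ((p : ℝ) - 1) * δ₂^2 := by
        calc ∑ j ∈ Finset.univ.erase i, M i j ^ 2
            ≤ ∑ _j ∈ Finset.univ.erase i, δ₂^2 := by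
              apply Finset.sum_le_sum
              intro j hj
              have hji : j ≠ i := Finset.ne_of_mem_erase hj
              calc M i j ^ 2 = |M i j| ^ 2 := (sq_abs _).symm
                _ ≤ δ₂ ^ 2 := pow_le_pow_left₀ (abs_nonneg _) (hoff i j hji.symm) 2
          _ = ((p : ℝ) - 1) * δ₂^2 := by
              rw [Finset.sum_const, Finset.card_erase_of_mem (Finset.mem_univ i)]
              simp [Nat.cast_sub hp]
      linarith
    calc ∑ i, (M * M).diag i ≤ ∑ _i : Fin p, (1 + ((p : ℝ) - 1) * δ₂^2) :=
          Finset.sum_le_sum fun i _ => hrow i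
      _ = (p : ℝ) * (1 + ((p : ℝ) - 1) * δ₂^2) := by simp; ring
  -- Cauchy-Schwarz via rank
  have hcard : (Finset.univ.filter fun i => lam i ≠ 0).card = d := by
    rw [← hrank, hH.rank_eq_card_non_zero_eigs, Fintype.card_subtype]
  have hcs : (∑ i, lam i) ^ 2 ≤ (d : ℝ) * ∑ i, lam i ^ 2 := by
    have hsplit : ∑ i, lam i = ∑ i ∈ Finset.univ.filter (fun i => lam i ≠ 0), lam i := by
      rw [Finset.sum_filter_ne_zero]
    rw [hsplit]
    calc (∑ i ∈ Finset.univ.filter (fun i => lam i ≠ 0), lam i) ^ 2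
        ≤ (Finset.univ.filter fun i => lam i ≠ 0).card *
          ∑ i ∈ Finset.univ.filter (fun i => lam i ≠ 0), lam i ^ 2 :=
          sq_sum_le_card_mul_sum_sq
      _ ≤ (d : ℝ) * ∑ i, lam i ^ 2 := by
          rw [hcard]
          apply mul_le_mul_of_nonneg_left _ (Nat.cast_nonneg d)
          exact Finset.sum_le_sum_of_subset_of_nonneg (Finset.filter_subset _ _)
            (fun i _ _ => sq_nonneg _)
  -- combine
  have hden : (0 : ℝ) < 1 + ((p : ℝ) - 1) * δ₂^2 := by
    have : (1 : ℝ) ≤ (p : ℝ) := by exact_mod_cast hp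
    nlinarith [sq_nonneg δ₂]
  rw [ge_iff_le, div_le_iff₀ hden]
  have hkey : ((p : ℝ) * (1 - δ₁)) ^ 2 ≤ (d : ℝ) * ((p : ℝ) * (1 + ((p : ℝ) - 1) * δ₂^2)) := by
    calc ((p : ℝ) * (1 - δ₁)) ^ 2 ≤ (∑ i, lam i) ^ 2 := by
          exact pow_le_pow_left₀ (mul_nonneg (Nat.cast_nonneg p) (by linarith)) htr 2
      _ ≤ (d : ℝ) * ∑ i, lam i ^ 2 := hcs
      _ ≤ (d : ℝ) * ((p : ℝ) * (1 + ((p : ℝ) - 1) * δ₂^2)) :=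
          mul_le_mul_of_nonneg_left htr2 (Nat.cast_nonneg d)
  have hpp : (0 : ℝ) < (p : ℝ) := by exact_mod_cast hp
  nlinarith [hkey]
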